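/- Suppose (X, Y, R) satisfies self-censoring, positivity, and the completeness condition that for each i and each x, the family of conditional distributions f(y_i | x, y_{-i}, R = 1) is complete in y_{-i} (i.e., any function g(y_i) with E{g(Y_i) | x, Y_{-i}, R = 1} = 0 for all y_{-i} must be identically zero). Then the itemwise odds function O_i(x, y_i) is the unique solution of the integral equation E{O(X, Y_i) | X = x, Y_{-i} = y_{-i}, R = 1} = f(x, y_{-i}, R_i = 0, R_{-i} = 1) / f(x, y_{-i}, R = 1), and hence O_i is identified from the observed-data distribution. -/

import Mathlib

open Finset
open scoped Classical

noncomputable def pr {Ω : Type*} [Fintype Ω] (μ : Ω → ℝ) (A : Ω → Prop) : ℝ :=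
  ∑ ω, if A ω then μ ω else 0

noncomputable def cpr {Ω : Type*} [Fintype Ω] (μ : Ω → ℝ) (A B : Ω → Prop) : ℝ :=
  pr μ (fun ω => A ω ∧ B ω) / pr μ B

/-- The itemwise odds function `O_i(x, y_i)`. -/
noncomputable def oddsFn {Ω 𝒳 𝒴 : Type*} [Fintype Ω] {p : ℕ} (μ : Ω → ℝ)
    (X : Ω → 𝒳) (Y : Ω → Fin p → 𝒴) (R : Ω → Fin p → Bool)
    (i : Fin p) (x : 𝒳) (yi : 𝒴) : ℝ :=
  cpr μ (fun ω => R ω i = false)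
      (fun ω => X ω = x ∧ Y ω i = yi ∧ ∀ j, j ≠ i → R ω j = true) /
    cpr μ (fun ω => R ω i = true)
      (fun ω => X ω = x ∧ Y ω i = yi ∧ ∀ j, j ≠ i → R ω j = true)

section helpers
variable {Ω : Type*} [Fintype Ω] {μ : Ω → ℝ}

lemma pr_nonneg (hμ0 : ∀ ω, 0 ≤ μ ω) (A : Ω → Prop) : 0 ≤ pr μ A :=
  Finset.sum_nonneg fun ω _ => by by_cases h : A ω <;> simp [h, hμ0 ω]

lemma pr_congr {A B : Ω → Prop} (h : ∀ ω, A ω ↔ B ω) : pr μ A = pr μ B := by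
  unfold pr
  exact Finset.sum_congr rfl fun ω _ => by rw [if_congr (h ω) rfl rfl]

lemma pr_mono (hμ0 : ∀ ω, 0 ≤ μ ω) {A B : Ω → Prop} (h : ∀ ω, A ω → B ω) :
    pr μ A ≤ pr μ B := by
  apply Finset.sum_le_sum
  intro ω _
  by_cases hA : A ω
  · simp [hA, h ω hA]
  · by_cases hB : B ω <;> simp [hA, hB, hμ0 ω]

lemma pr_eq_zero (hμ0 : ∀ ω, 0 ≤ μ ω) {A B : Ω → Prop} (h : ∀ ω, A ω → B ω)
    (hB : pr μ B = 0) : pr μ A = 0 :=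
  le_antisymm (hB ▸ pr_mono hμ0 h) (pr_nonneg hμ0 A)

lemma pr_split {𝒴 : Type*} [Fintype 𝒴] (A : Ω → Prop) (f : Ω → 𝒴) :
    pr μ A = ∑ v : 𝒴, pr μ (fun ω => A ω ∧ f ω = v) := by
  unfold pr
  rw [Finset.sum_comm]
  apply Finset.sum_congr rfl
  intro ω _
  by_cases hA : A ω <;> simp [hA]

lemma all_iff {p : ℕ} (i : Fin p) (P : Fin p → Prop) :
    (∀ j, P j) ↔ P i ∧ ∀ j, j ≠ i → P j := by
  constructor
  · exact fun h => ⟨h i, fun j _ => h j⟩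
  · rintro ⟨hi, h⟩ j
    by_cases hj : j = i
    · subst hj; exact hi
    · exact h j hj

end helpers

lemma pointwise {Ω 𝒳 𝒴 : Type*} [Fintype Ω] [Fintype 𝒴] {p : ℕ}
    (μ : Ω → ℝ) (hμ0 : ∀ ω, 0 ≤ μ ω)
    (X : Ω → 𝒳) (Y : Ω → Fin p → 𝒴) (R : Ω → Fin p → Bool)
    (selfcensor : ∀ (i : Fin p) (a : Bool) (x : 𝒳) (yi : 𝒴) (yv : Fin p → 𝒴)
        (rv : Fin p → Bool),
      pr μ (fun ω => X ω = x ∧ Y ω i = yi ∧ ∀ j, j ≠ i → R ω j = rv j) > 0 →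
      cpr μ (fun ω => R ω i = a ∧ ∀ j, j ≠ i → Y ω j = yv j)
          (fun ω => X ω = x ∧ Y ω i = yi ∧ ∀ j, j ≠ i → R ω j = rv j)
        = cpr μ (fun ω => R ω i = a)
            (fun ω => X ω = x ∧ Y ω i = yi ∧ ∀ j, j ≠ i → R ω j = rv j)
          * cpr μ (fun ω => ∀ j, j ≠ i → Y ω j = yv j)
            (fun ω => X ω = x ∧ Y ω i = yi ∧ ∀ j, j ≠ i → R ω j = rv j))
    (hpos : ∀ (r' : Fin p → Bool) (x : 𝒳) (y : Fin p → 𝒴),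
      pr μ (fun ω => X ω = x ∧ ∀ j, Y ω j = y j) > 0 →
      cpr μ (fun ω => ∀ j, R ω j = r' j) (fun ω => X ω = x ∧ ∀ j, Y ω j = y j) > 0)
    (i : Fin p) (x : 𝒳) (y : Fin p → 𝒴) (yi : 𝒴) :
    oddsFn μ X Y R i x yi *
      pr μ (fun ω => Y ω i = yi ∧
        (X ω = x ∧ (∀ j, j ≠ i → Y ω j = y j) ∧ ∀ j, R ω j = true))
      = pr μ (fun ω => (X ω = x ∧ (∀ j, j ≠ i → Y ω j = y j) ∧
          R ω i = false ∧ ∀ j, j ≠ i → R ω j = true) ∧ Y ω i = yi) := by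
  classical
  set y' : Fin p → 𝒴 := Function.update y i yi with hy'def
  have hy'i : y' i = yi := Function.update_self i yi y
  have hy'j : ∀ j, j ≠ i → y' j = y j := fun j hj => Function.update_of_ne hj yi y
  have hYall : ∀ ω, (∀ j, Y ω j = y' j) ↔
      (Y ω i = yi ∧ ∀ j, j ≠ i → Y ω j = y j) := by
    intro ω
    rw [all_iff i (fun j => Y ω j = y' j)]
    apply and_congr
    · rw [hy'i]
    · exact forall_congr' fun j => imp_congr_right fun hj => by rw [hy'j j hj]
  -- names
  -- NT event equality with Y_i = yi ∧ C:
  have eNT : pr μ (fun ω => Y ω i = yi ∧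
        (X ω = x ∧ (∀ j, j ≠ i → Y ω j = y j) ∧ ∀ j, R ω j = true))
      = pr μ (fun ω => (R ω i = true ∧ ∀ j, j ≠ i → Y ω j = y j) ∧
          (X ω = x ∧ Y ω i = yi ∧ ∀ j, j ≠ i → R ω j = true)) := by
    apply pr_congr; intro ω
    rw [all_iff i (fun j => R ω j = true)]
    tauto
  have eNF : pr μ (fun ω => (X ω = x ∧ (∀ j, j ≠ i → Y ω j = y j) ∧
          R ω i = false ∧ ∀ j, j ≠ i → R ω j = true) ∧ Y ω i = yi)
      = pr μ (fun ω => (R ω i = false ∧ ∀ j, j ≠ i → Y ω j = y j) ∧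
          (X ω = x ∧ Y ω i = yi ∧ ∀ j, j ≠ i → R ω j = true)) := by
    apply pr_congr; intro ω; tauto
  rw [eNT, eNF]
  rcases (pr_nonneg hμ0 (fun ω => X ω = x ∧ ∀ j, Y ω j = y' j)).lt_or_eq with hP | hP
  · -- positive case
    have hXYR : 0 < pr μ (fun ω => (∀ j, R ω j = true) ∧
        (X ω = x ∧ ∀ j, Y ω j = y' j)) := by
      have h := hpos (fun _ => true) x y' hP
      unfold cpr at h
      by_contra hle
      push_neg at hle
      have : pr μ (fun ω => (∀ j, R ω j = true) ∧ (X ω = x ∧ ∀ j, Y ω j = y' j)) /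
          pr μ (fun ω => X ω = x ∧ ∀ j, Y ω j = y' j) ≤ 0 :=
        div_nonpos_of_nonpos_of_nonneg hle hP.le
      linarith
    have hNT : 0 < pr μ (fun ω => (R ω i = true ∧ ∀ j, j ≠ i → Y ω j = y j) ∧
        (X ω = x ∧ Y ω i = yi ∧ ∀ j, j ≠ i → R ω j = true)) := by
      have e : pr μ (fun ω => (∀ j, R ω j = true) ∧ (X ω = x ∧ ∀ j, Y ω j = y' j))
          = pr μ (fun ω => (R ω i = true ∧ ∀ j, j ≠ i → Y ω j = y j) ∧
            (X ω = x ∧ Y ω i = yi ∧ ∀ j, j ≠ i → R ω j = true)) := by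
        apply pr_congr; intro ω
        rw [all_iff i (fun j => R ω j = true), hYall ω]
        tauto
      linarith [e ▸ hXYR]
    have hB : 0 < pr μ (fun ω => X ω = x ∧ Y ω i = yi ∧ ∀ j, j ≠ i → R ω j = true) :=
      lt_of_lt_of_le hNT (pr_mono hμ0 fun ω h => h.2)
    have hsc_t := selfcensor i true x yi y (fun _ => true) hB
    have hsc_f := selfcensor i false x yi y (fun _ => true) hB
    unfold cpr at hsc_t hsc_f
    set prB := pr μ (fun ω => X ω = x ∧ Y ω i = yi ∧ ∀ j, j ≠ i → R ω j = true)
    set NT := pr μ (fun ω => (R ω i = true ∧ ∀ j, j ≠ i → Y ω j = y j) ∧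
        (X ω = x ∧ Y ω i = yi ∧ ∀ j, j ≠ i → R ω j = true))
    set NF := pr μ (fun ω => (R ω i = false ∧ ∀ j, j ≠ i → Y ω j = y j) ∧
        (X ω = x ∧ Y ω i = yi ∧ ∀ j, j ≠ i → R ω j = true))
    set Rt := pr μ (fun ω => R ω i = true ∧
        (X ω = x ∧ Y ω i = yi ∧ ∀ j, j ≠ i → R ω j = true))
    set Rf := pr μ (fun ω => R ω i = false ∧
        (X ω = x ∧ Y ω i = yi ∧ ∀ j, j ≠ i → R ω j = true))
    set Yb := pr μ (fun ω => (∀ j, j ≠ i → Y ω j = y j) ∧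
        (X ω = x ∧ Y ω i = yi ∧ ∀ j, j ≠ i → R ω j = true))
    have hBne : prB ≠ 0 := ne_of_gt hB
    have h1' : NT * prB = Rt * Yb := by
      field_simp at hsc_t
      exact hsc_t
    have h2' : NF * prB = Rf * Yb := by
      field_simp at hsc_f
      exact hsc_f
    have hRtYb : 0 < Rt * Yb := by rw [← h1']; exact mul_pos hNT hB
    have hRt0 : (0:ℝ) ≤ Rt := pr_nonneg hμ0 _
    have hYb0 : (0:ℝ) ≤ Yb := pr_nonneg hμ0 _
    have hRt : 0 < Rt := by nlinarith
    have goal_odds : oddsFn μ X Y R i x yi = Rf / Rt := by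
      show Rf / prB / (Rt / prB) = Rf / Rt
      exact div_div_div_cancel_right₀ hBne Rf Rt
    rw [goal_odds]
    have key2 : Rf * NT = NF * Rt := by
      have e1 : Rf * NT * prB = NF * Rt * prB := by
        linear_combination Rf * h1' - Rt * h2'
      exact mul_right_cancel₀ hBne e1
    rw [div_mul_eq_mul_div, key2, mul_div_assoc, div_self (ne_of_gt hRt), mul_one]
  · -- zero case
    have himp : ∀ ω, (X ω = x ∧ Y ω i = yi ∧ ∀ j, j ≠ i → Y ω j = y j) →
        (X ω = x ∧ ∀ j, Y ω j = y' j) := by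
      rintro ω ⟨h1, h2, h3⟩
      exact ⟨h1, (hYall ω).mpr ⟨h2, h3⟩⟩
    have hNT0 : pr μ (fun ω => (R ω i = true ∧ ∀ j, j ≠ i → Y ω j = y j) ∧
        (X ω = x ∧ Y ω i = yi ∧ ∀ j, j ≠ i → R ω j = true)) = 0 := by
      apply pr_eq_zero hμ0 (B := fun ω => X ω = x ∧ ∀ j, Y ω j = y' j) _ hP.symm
      rintro ω ⟨⟨_, h3⟩, h1, h2, _⟩
      exact himp ω ⟨h1, h2, h3⟩
    have hNF0 : pr μ (fun ω => (R ω i = false ∧ ∀ j, j ≠ i → Y ω j = y j) ∧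
        (X ω = x ∧ Y ω i = yi ∧ ∀ j, j ≠ i → R ω j = true)) = 0 := by
      apply pr_eq_zero hμ0 (B := fun ω => X ω = x ∧ ∀ j, Y ω j = y' j) _ hP.symm
      rintro ω ⟨⟨_, h3⟩, h1, h2, _⟩
      exact himp ω ⟨h1, h2, h3⟩
    rw [hNT0, hNF0, mul_zero]

/-- Theorem 2, itemwise: under self-censoring, positivity and
completeness of `f(y_i | x, y_{-i}, R = 1)` in `y_{-i}`, the itemwise odds function
`O_i(x, ·)` is the unique solution of the observed-data integral equation
`E{O(X, Y_i) | x, y_{-i}, R = 1} = f(x, y_{-i}, R_i = 0, R_{-i} = 1) / f(x, y_{-i}, R = 1)`,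
hence is identified from the observed-data distribution. -/
theorem stmt5 {Ω 𝒳 𝒴 : Type*} [Fintype Ω] [Fintype 𝒴] {p : ℕ}
    (μ : Ω → ℝ) (hμ0 : ∀ ω, 0 ≤ μ ω) (hμ1 : ∑ ω, μ ω = 1)
    (X : Ω → 𝒳) (Y : Ω → Fin p → 𝒴) (R : Ω → Fin p → Bool)
    (selfcensor : ∀ (i : Fin p) (a : Bool) (x : 𝒳) (yi : 𝒴) (yv : Fin p → 𝒴)
        (rv : Fin p → Bool),
      pr μ (fun ω => X ω = x ∧ Y ω i = yi ∧ ∀ j, j ≠ i → R ω j = rv j) > 0 →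
      cpr μ (fun ω => R ω i = a ∧ ∀ j, j ≠ i → Y ω j = yv j)
          (fun ω => X ω = x ∧ Y ω i = yi ∧ ∀ j, j ≠ i → R ω j = rv j)
        = cpr μ (fun ω => R ω i = a)
            (fun ω => X ω = x ∧ Y ω i = yi ∧ ∀ j, j ≠ i → R ω j = rv j)
          * cpr μ (fun ω => ∀ j, j ≠ i → Y ω j = yv j)
            (fun ω => X ω = x ∧ Y ω i = yi ∧ ∀ j, j ≠ i → R ω j = rv j))
    (hpos : ∀ (r' : Fin p → Bool) (x : 𝒳) (y : Fin p → 𝒴),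
      pr μ (fun ω => X ω = x ∧ ∀ j, Y ω j = y j) > 0 →
      cpr μ (fun ω => ∀ j, R ω j = r' j) (fun ω => X ω = x ∧ ∀ j, Y ω j = y j) > 0)
    (i : Fin p) (x : 𝒳)
    (complete : ∀ g : 𝒴 → ℝ,
      (∀ y : Fin p → 𝒴,
        pr μ (fun ω => X ω = x ∧ (∀ j, j ≠ i → Y ω j = y j) ∧ ∀ j, R ω j = true) > 0 →
        ∑ yi : 𝒴, g yi *
          cpr μ (fun ω => Y ω i = yi)
            (fun ω => X ω = x ∧ (∀ j, j ≠ i → Y ω j = y j) ∧ ∀ j, R ω j = true) = 0) →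
      ∀ yi : 𝒴, pr μ (fun ω => X ω = x ∧ Y ω i = yi ∧ ∀ j, R ω j = true) > 0 → g yi = 0)
    (O : 𝒴 → ℝ)
    (hO : ∀ y : Fin p → 𝒴,
      pr μ (fun ω => X ω = x ∧ (∀ j, j ≠ i → Y ω j = y j) ∧ ∀ j, R ω j = true) > 0 →
      ∑ yi : 𝒴, O yi *
          cpr μ (fun ω => Y ω i = yi)
            (fun ω => X ω = x ∧ (∀ j, j ≠ i → Y ω j = y j) ∧ ∀ j, R ω j = true)
        = pr μ (fun ω => X ω = x ∧ (∀ j, j ≠ i → Y ω j = y j) ∧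
              R ω i = false ∧ ∀ j, j ≠ i → R ω j = true) /
          pr μ (fun ω => X ω = x ∧ (∀ j, j ≠ i → Y ω j = y j) ∧ ∀ j, R ω j = true)) :
    ∀ yi : 𝒴, pr μ (fun ω => X ω = x ∧ Y ω i = yi ∧ ∀ j, R ω j = true) > 0 →
      O yi = oddsFn μ X Y R i x yi := by
  intro yi0 hyi0
  have key : ∀ y : Fin p → 𝒴,
      pr μ (fun ω => X ω = x ∧ (∀ j, j ≠ i → Y ω j = y j) ∧ ∀ j, R ω j = true) > 0 →
      ∑ yi : 𝒴, oddsFn μ X Y R i x yi *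
          cpr μ (fun ω => Y ω i = yi)
            (fun ω => X ω = x ∧ (∀ j, j ≠ i → Y ω j = y j) ∧ ∀ j, R ω j = true)
        = pr μ (fun ω => X ω = x ∧ (∀ j, j ≠ i → Y ω j = y j) ∧
              R ω i = false ∧ ∀ j, j ≠ i → R ω j = true) /
          pr μ (fun ω => X ω = x ∧ (∀ j, j ≠ i → Y ω j = y j) ∧ ∀ j, R ω j = true) := by
    intro y _
    rw [pr_split (μ := μ) (fun ω => X ω = x ∧ (∀ j, j ≠ i → Y ω j = y j) ∧
        R ω i = false ∧ ∀ j, j ≠ i → R ω j = true) (fun ω => Y ω i), Finset.sum_div]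
    apply Finset.sum_congr rfl
    intro yi _
    simp only [cpr]
    rw [← mul_div_assoc, pointwise μ hμ0 X Y R selfcensor hpos i x y yi]
  have hdiff : ∀ y : Fin p → 𝒴,
      pr μ (fun ω => X ω = x ∧ (∀ j, j ≠ i → Y ω j = y j) ∧ ∀ j, R ω j = true) > 0 →
      ∑ yi : 𝒴, (O yi - oddsFn μ X Y R i x yi) *
          cpr μ (fun ω => Y ω i = yi)
            (fun ω => X ω = x ∧ (∀ j, j ≠ i → Y ω j = y j) ∧ ∀ j, R ω j = true) = 0 := by
    intro y hy
    have h1 := hO y hy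
    have h2 := key y hy
    simp only [sub_mul, Finset.sum_sub_distrib, h1, h2, sub_self]
  have h0 := complete (fun yi => O yi - oddsFn μ X Y R i x yi) hdiff yi0 hyi0
  linarith
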